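/- Let Γ be a cancellation monoid with neutral element e, A a Γ-graded ring, and let M and N be Γ-graded A-modules. Let φ: M → N be a surjective graded A-homomorphism. If N is projective as an (ungraded) A-module, then φ admits a graded section: there exists a graded A-homomorphism σ: N → M with φ ∘ σ = id_N. -/

import Mathlib

set_option synthInstance.maxHeartbeats 1000000
set_option maxHeartbeats 1000000

section Aux

variable {Γ : Type*} [AddCancelMonoid Γ] [DecidableEq Γ]
    {A : Type*} [Ring A] (𝒜 : Γ → AddSubgroup A) [GradedRing 𝒜]
    {M : Type*} [AddCommGroup M] [Module A M]
    (ℳ : Γ → AddSubgroup M) [SetLike.GradedSMul 𝒜 ℳ] [DirectSum.Decomposition ℳ]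

/-- Component-picking commutes with homogeneous scalar multiplication. -/
theorem decompose_smul_aux {δ : Γ} {a : A} (ha : a ∈ 𝒜 δ) (m : M) (γ : Γ) :
    (DirectSum.decompose ℳ (a • m) (δ + γ) : M) = a • (DirectSum.decompose ℳ m γ : M) := by
  induction m using DirectSum.Decomposition.inductionOn ℳ with
  | zero => simp
  | @homogeneous γ' m' =>
    have hsm : a • (m' : M) ∈ ℳ (δ + γ') := SetLike.GradedSMul.smul_mem ha m'.2
    rcases eq_or_ne γ' γ with rfl | hne
    · rw [DirectSum.decompose_of_mem_same ℳ m'.2, DirectSum.decompose_of_mem_same ℳ hsm]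
    · rw [DirectSum.decompose_of_mem_ne ℳ m'.2 hne,
        DirectSum.decompose_of_mem_ne ℳ hsm (fun h => hne (add_left_cancel h)), smul_zero]
  | add m₁ m₂ h₁ h₂ =>
    rw [smul_add, DirectSum.decompose_add, DirectSum.add_apply, AddSubgroup.coe_add,
      h₁, h₂, DirectSum.decompose_add, DirectSum.add_apply, AddSubgroup.coe_add, smul_add]

end Aux

/-- (Key step of **Proposition 1.2**.)  Let `Γ` be a cancellation monoid (written
additively), `A` a `Γ`-graded ring, and `M`, `N` two `Γ`-graded `A`-modules.  Let
`φ : M → N` be a surjective graded `A`-homomorphism.  If `N` is projective as an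
ungraded `A`-module, then `φ` admits a graded section `σ : N → M` with `φ ∘ σ = id`. -/
theorem exists_graded_section_of_projective
    {Γ : Type*} [AddCancelMonoid Γ] [DecidableEq Γ]
    {A : Type*} [Ring A] (𝒜 : Γ → AddSubgroup A) [GradedRing 𝒜]
    {M N : Type*} [AddCommGroup M] [Module A M] [AddCommGroup N] [Module A N]
    (ℳ : Γ → AddSubgroup M) [SetLike.GradedSMul 𝒜 ℳ] [DirectSum.Decomposition ℳ]
    (𝒩 : Γ → AddSubgroup N) [SetLike.GradedSMul 𝒜 𝒩] [DirectSum.Decomposition 𝒩]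
    (φ : M →ₗ[A] N) (hsurj : Function.Surjective φ)
    (hgraded : ∀ γ : Γ, ∀ x ∈ ℳ γ, φ x ∈ 𝒩 γ)
    (hproj : Module.Projective A N) :
    ∃ σ : N →ₗ[A] M, (∀ γ : Γ, ∀ y ∈ 𝒩 γ, σ y ∈ ℳ γ) ∧ φ ∘ₗ σ = LinearMap.id := by
  obtain ⟨s, hs⟩ := Module.projective_lifting_property φ LinearMap.id hsurj
  set f : ∀ γ : Γ, 𝒩 γ →+ M := fun γ =>
    { toFun := fun y => (DirectSum.decompose ℳ (s y) γ : M)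
      map_zero' := by simp
      map_add' := fun y₁ y₂ => by
        simp [DirectSum.decompose_add, DirectSum.add_apply] } with hf
  set σ₀ : N →+ M :=
    (DirectSum.toAddMonoid f).comp (DirectSum.decomposeAddEquiv 𝒩).toAddMonoidHom with hσ₀
  have key : ∀ γ : Γ, ∀ y ∈ 𝒩 γ, σ₀ y = (DirectSum.decompose ℳ (s y) γ : M) := by
    intro γ y hy
    rw [hσ₀]
    simp only [AddMonoidHom.comp_apply, AddEquiv.toAddMonoidHom_eq_coe,
      AddMonoidHom.coe_coe, DirectSum.decomposeAddEquiv_apply]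
    rw [DirectSum.decompose_of_mem 𝒩 hy, DirectSum.toAddMonoid_of]
    rfl
  have hmem : ∀ γ : Γ, ∀ y ∈ 𝒩 γ, σ₀ y ∈ ℳ γ := fun γ y hy => by
    rw [key γ y hy]; exact SetLike.coe_mem _
  have hsmul : ∀ (a : A) (y : N), σ₀ (a • y) = a • σ₀ y := by
    intro a
    induction a using DirectSum.Decomposition.inductionOn 𝒜 with
    | zero => intro y; simp
    | @homogeneous δ a' =>
      intro y
      induction y using DirectSum.Decomposition.inductionOn 𝒩 with
      | zero => simp
      | @homogeneous γ y' =>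
        have hsm : (a' : A) • (y' : N) ∈ 𝒩 (δ + γ) := SetLike.GradedSMul.smul_mem a'.2 y'.2
        rw [key (δ + γ) _ hsm, key γ _ y'.2, map_smul, decompose_smul_aux 𝒜 ℳ a'.2]
      | add y₁ y₂ h₁ h₂ => rw [smul_add, map_add, h₁, h₂, map_add, smul_add]
    | add a₁ a₂ h₁ h₂ => intro y; rw [add_smul, map_add, h₁ y, h₂ y, add_smul]
  refine ⟨{ toFun := σ₀, map_add' := map_add σ₀, map_smul' := hsmul }, hmem, ?_⟩
  ext y
  show φ (σ₀ y) = y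
  induction y using DirectSum.Decomposition.inductionOn 𝒩 with
  | zero => simp
  | @homogeneous γ y' =>
    rw [key γ _ y'.2]
    have hφc : ∀ m : M, φ (DirectSum.decompose ℳ m γ : M)
        = (DirectSum.decompose 𝒩 (φ m) γ : N) := by
      intro m
      induction m using DirectSum.Decomposition.inductionOn ℳ with
      | zero => simp
      | @homogeneous γ' m' =>
        rcases eq_or_ne γ' γ with rfl | hne
        · rw [DirectSum.decompose_of_mem_same ℳ m'.2,
            DirectSum.decompose_of_mem_same 𝒩 (hgraded _ _ m'.2)]
        · rw [DirectSum.decompose_of_mem_ne ℳ m'.2 hne,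
            DirectSum.decompose_of_mem_ne 𝒩 (hgraded _ _ m'.2) hne, map_zero]
      | add m₁ m₂ h₁ h₂ =>
        rw [DirectSum.decompose_add, DirectSum.add_apply, AddSubgroup.coe_add, map_add,
          h₁, h₂, map_add, DirectSum.decompose_add, DirectSum.add_apply, AddSubgroup.coe_add]
    have hsy : φ (s (y' : N)) = (y' : N) := by
      have := congrArg (fun g => g (y' : N)) hs; simpa using this
    rw [hφc, hsy, DirectSum.decompose_of_mem_same 𝒩 y'.2]
  | add y₁ y₂ h₁ h₂ => rw [map_add, map_add, h₁, h₂]
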